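/- Let E and F be reflexive Banach spaces over ℝ, let L : E → F' (the continuous dual of F) be a continuous linear operator, let D ⊆ F be a dense subspace, and let L* : F → E' be the adjoint of L, defined by (L*v)(u) = (Lu)(v) for u ∈ E, v ∈ F. If there exists γ > 0 such that ‖L*v‖_{E'} ≥ γ‖v‖_F for all v ∈ D, then for every f ∈ F' there exists u ∈ E with Lu = f and ‖u‖_E ≤ γ⁻¹ ‖f‖_{F'}. -/

import Mathlib

open NormedSpace

/-- **Lions–Lax–Milgram type duality lemma.**
Let `E` and `F` be reflexive Banach spaces over `ℝ` (reflexivity being expressed as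
surjectivity of the canonical inclusion into the double dual), `L : E →L[ℝ] F'` a
continuous linear operator, `D ⊆ F` a dense subspace, and `Lstar : F →L[ℝ] E'` the
adjoint of `L`, i.e. `(Lstar v) u = (L u) v`.  If there is `γ > 0` with
`γ‖v‖ ≤ ‖Lstar v‖` for all `v ∈ D`, then for every `f ∈ F'` there exists `u ∈ E`
with `L u = f` and `‖u‖ ≤ γ⁻¹ ‖f‖`. -/
theorem stmt0
    (E F : Type*) [NormedAddCommGroup E] [NormedSpace ℝ E] [CompleteSpace E]
    [NormedAddCommGroup F] [NormedSpace ℝ F] [CompleteSpace F]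
    (hErefl : Function.Surjective (inclusionInDoubleDual ℝ E))
    (hFrefl : Function.Surjective (inclusionInDoubleDual ℝ F))
    (L : E →L[ℝ] StrongDual ℝ F)
    (Lstar : F →L[ℝ] StrongDual ℝ E)
    (hLstar : ∀ (u : E) (v : F), Lstar v u = L u v)
    (D : Submodule ℝ F) (hD : Dense (D : Set F))
    (γ : ℝ) (hγ : 0 < γ)
    (hcoer : ∀ v ∈ D, γ * ‖v‖ ≤ ‖Lstar v‖) :
    ∀ f : StrongDual ℝ F, ∃ u : E, L u = f ∧ ‖u‖ ≤ γ⁻¹ * ‖f‖ := by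
  -- extend coercivity to all of F by density
  have hcoer' : ∀ v : F, γ * ‖v‖ ≤ ‖Lstar v‖ := by
    have hcl : IsClosed {v : F | γ * ‖v‖ ≤ ‖Lstar v‖} :=
      isClosed_le (continuous_const.mul continuous_norm) Lstar.continuous.norm
    intro v
    have hv : v ∈ closure (D : Set F) := by rw [hD.closure_eq]; trivial
    exact hcl.closure_subset (closure_mono (fun x hx => hcoer x hx) hv)
  intro f
  have hinj : Function.Injective (Lstar : F →ₗ[ℝ] StrongDual ℝ E) := by
    intro a b hab
    have h := hcoer' (a - b)
    rw [map_sub] at h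
    simp only [show Lstar a = Lstar b from hab, sub_self, norm_zero] at h
    have h0 : ‖a - b‖ ≤ 0 := by nlinarith [norm_nonneg (a - b)]
    have := norm_le_zero_iff.mp h0
    exact sub_eq_zero.mp this
  -- the range of Lstar, and the inverse equivalence
  set p : Submodule ℝ (StrongDual ℝ E) := LinearMap.range (Lstar : F →ₗ[ℝ] StrongDual ℝ E) with hp
  let e : F ≃ₗ[ℝ] p := LinearEquiv.ofInjective (Lstar : F →ₗ[ℝ] StrongDual ℝ E) hinj
  -- the functional φ on p: φ (Lstar v) = f v
  let φ : p →ₗ[ℝ] ℝ := (f : F →ₗ[ℝ] ℝ) ∘ₗ (e.symm : p →ₗ[ℝ] F)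
  have hφ : ∀ v : F, φ (e v) = f v := by
    intro v
    simp [φ, LinearEquiv.symm_apply_apply]
  have hφ_bound : ∀ x : p, ‖φ x‖ ≤ (γ⁻¹ * ‖f‖) * ‖x‖ := by
    intro x
    obtain ⟨v, hv⟩ : ∃ v, e v = x := e.surjective x
    have hxv : (x : StrongDual ℝ E) = Lstar v := by
      rw [← hv]; rfl
    have h1 : ‖f v‖ ≤ ‖f‖ * ‖v‖ := f.le_opNorm v
    have h2 : ‖v‖ ≤ γ⁻¹ * ‖Lstar v‖ := by
      rw [le_inv_mul_iff₀ hγ]; exact hcoer' v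
    have hxnorm : ‖x‖ = ‖Lstar v‖ := by rw [← hxv]; rfl
    calc ‖φ x‖ = ‖f v‖ := by rw [← hv, hφ]
      _ ≤ ‖f‖ * ‖v‖ := h1
      _ ≤ ‖f‖ * (γ⁻¹ * ‖Lstar v‖) := by
          exact mul_le_mul_of_nonneg_left h2 (norm_nonneg f)
      _ = (γ⁻¹ * ‖f‖) * ‖x‖ := by rw [hxnorm]; ring
  -- make it continuous and extend by Hahn–Banach
  let φc : p →L[ℝ] ℝ := LinearMap.mkContinuous (E := p) φ (γ⁻¹ * ‖f‖) hφ_bound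
  obtain ⟨g, hg_ext, hg_norm⟩ := exists_extension_norm_eq p φc
  have hgle : ‖g‖ ≤ γ⁻¹ * ‖f‖ := by
    rw [hg_norm]
    refine ContinuousLinearMap.opNorm_le_bound _ (by positivity) (fun x => ?_)
    exact hφ_bound x
  -- reflexivity of E
  obtain ⟨u, hu⟩ := hErefl g
  refine ⟨u, ?_, ?_⟩
  · ext v
    have h1 : g (Lstar v) = f v := by
      have := hg_ext ⟨Lstar v, ⟨v, rfl⟩⟩
      have h2 : φc ⟨Lstar v, ⟨v, rfl⟩⟩ = f v := by
        have : e v = (⟨Lstar v, ⟨v, rfl⟩⟩ : p) := rfl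
        calc φc ⟨Lstar v, ⟨v, rfl⟩⟩ = φ (e v) := by rw [this]; rfl
          _ = f v := hφ v
      exact this.trans h2
    have h3 : inclusionInDoubleDual ℝ E u (Lstar v) = Lstar v u := rfl
    rw [← hLstar u v, ← h3, hu, h1]
  · have : ‖u‖ = ‖g‖ := by
      rw [← hu]
      exact ((inclusionInDoubleDualLi ℝ (E := E)).norm_map u).symm
    rw [this]; exact hgle
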